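/- arXiv:2107.10081 — 4 statements merged into one kernel-verified Lean document; each statement's English description precedes it below -/
import Mathlib

section
/- Let G be a group, E an abelian group, F a subgroup of the center of G, and φ : F → E an injective group homomorphism. Let N = {(f, φ(f)⁻¹) : f ∈ F}, a (central, hence normal) subgroup of G × E, let H = (G × E)/N and let q : G × E → H be the quotient map. Let K ≤ G and K_E ≤ E be subgroups such that every f ∈ F with φ(f) ∈ K_E lies in K, and let U = q(K × K_E) ≤ H. Then for every g ∈ G one has {x ∈ G : q(x,1) ∈ U · q(g,1) · U} = K g K. Consequently, the map of double coset spaces K\G/K → U\H/U sending K g K to U q(g,1) U is injective. -/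
/-- Let `G` be a group, `E` an abelian group, `F` a subgroup of the
center of `G`, and `φ : F → E` an injective group homomorphism.  Let
`N = {(f, φ(f)⁻¹) : f ∈ F}` (a central, hence normal, subgroup of `G × E`), let
`H = (G × E)/N` and `q : G × E → H` the quotient map.  Let `K ≤ G` and `K_E ≤ E` be
subgroups such that every `f ∈ F` with `φ f ∈ KE` lies in `K`, and let
`U = q(K × K_E)`.  Then for every `g : G` one has
`{x ∈ G : q(x,1) ∈ U·q(g,1)·U} = K g K`; consequently the induced map of double coset
spaces `K\G/K → U\H/U`, `KgK ↦ U q(g,1) U`, is injective. -/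
theorem stmt0 {G E : Type*} [Group G] [CommGroup E]
    (F : Subgroup G) (hF : F ≤ Subgroup.center G)
    (φ : ↥F →* E) (hφ : Function.Injective φ)
    (N : Subgroup (G × E)) [N.Normal]
    (hNdef : ∀ x : G × E, x ∈ N ↔ ∃ f : F, x = ((f : G), (φ f)⁻¹))
    (K : Subgroup G) (KE : Subgroup E)
    (hsmall : ∀ f : F, φ f ∈ KE → (f : G) ∈ K)
    (U : Subgroup ((G × E) ⧸ N))
    (hU : U = Subgroup.map (QuotientGroup.mk' N) (K.prod KE)) :
    (∀ g : G,
      {x : G | ∃ u₁ ∈ U, ∃ u₂ ∈ U,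
          (QuotientGroup.mk' N) (x, 1) = u₁ * (QuotientGroup.mk' N) (g, 1) * u₂}
        = {x : G | ∃ k₁ ∈ K, ∃ k₂ ∈ K, x = k₁ * g * k₂}) ∧
    (∀ g g' : G,
      DoubleCoset.mk U U ((QuotientGroup.mk' N) (g, 1)) = DoubleCoset.mk U U ((QuotientGroup.mk' N) (g', 1)) →
        DoubleCoset.mk K K g = DoubleCoset.mk K K g') := by
  have main : ∀ g : G,
      {x : G | ∃ u₁ ∈ U, ∃ u₂ ∈ U,
          (QuotientGroup.mk' N) (x, 1) = u₁ * (QuotientGroup.mk' N) (g, 1) * u₂}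
        = {x : G | ∃ k₁ ∈ K, ∃ k₂ ∈ K, x = k₁ * g * k₂} := by
    intro g
    ext x
    simp only [Set.mem_setOf_eq]
    constructor
    · rintro ⟨u₁, hu₁, u₂, hu₂, hx⟩
      rw [hU] at hu₁ hu₂
      obtain ⟨⟨k₁, e₁⟩, hk₁, rfl⟩ := hu₁
      obtain ⟨⟨k₂, e₂⟩, hk₂, rfl⟩ := hu₂
      simp only [SetLike.mem_coe, Subgroup.mem_prod] at hk₁ hk₂
      rw [← map_mul, ← map_mul] at hx
      rw [QuotientGroup.mk'_eq_mk' ] at hx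
      obtain ⟨z, hz, hxz⟩ := hx
      obtain ⟨f, rfl⟩ := (hNdef z).mp hz
      have h1 : x * (f : G) = k₁ * g * k₂ := congrArg Prod.fst hxz
      have h2 : (1 : E) * (φ f)⁻¹ = e₁ * (1 : E) * e₂ := congrArg Prod.snd hxz
      have hfK : ((f⁻¹ : ↥F) : G) ∈ K := by
        apply hsmall
        have : φ f⁻¹ = e₁ * e₂ := by
          rw [map_inv]
          simpa using h2
        rw [this]; exact mul_mem hk₁.2 hk₂.2
      refine ⟨k₁, hk₁.1, k₂ * ((f⁻¹ : ↥F) : G), mul_mem hk₂.1 hfK, ?_⟩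
      have : x = k₁ * g * k₂ * (f : G)⁻¹ := by
        rw [← h1]; group
      simpa [mul_assoc] using this
    · rintro ⟨k₁, hk₁, k₂, hk₂, rfl⟩
      refine ⟨(QuotientGroup.mk' N) (k₁, 1), ?_, (QuotientGroup.mk' N) (k₂, 1), ?_, ?_⟩
      · rw [hU]; exact ⟨(k₁, 1), ⟨hk₁, one_mem _⟩, rfl⟩
      · rw [hU]; exact ⟨(k₂, 1), ⟨hk₂, one_mem _⟩, rfl⟩
      · rw [← map_mul, ← map_mul]
        norm_num
  refine ⟨main, ?_⟩
  intro g g' h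
  rw [DoubleCoset.eq] at h ⊢
  obtain ⟨u₁, hu₁, u₂, hu₂, h⟩ := h
  have : g' ∈ {x : G | ∃ u₁ ∈ U, ∃ u₂ ∈ U,
      (QuotientGroup.mk' N) (x, 1) = u₁ * (QuotientGroup.mk' N) (g, 1) * u₂} :=
    ⟨u₁, hu₁, u₂, hu₂, h⟩
  rw [main g] at this
  exact this
end

section
/- Let A and B be abelian groups, and let ι : A → B and n : B → A be group homomorphisms satisfying n(ι(a)) = a² for all a ∈ A. Let D = {(a², ι(a)⁻¹) : a ∈ A} ≤ A × B and let C = (A × B)/D. Let A₊, A₁ ≤ A and B₀, B₁ ≤ B be subgroups with n(B₀) ⊆ A₊ and n(B₁) ⊆ A₁, and let C₀, C₁ ≤ C be the images of A₊ × B₀ and of A₁ × B₁ respectively. Then the homomorphism A → C, a ↦ [(a,1)], induces an injective map of quotient groups A/(A₊·A₁) → C/(C₀·C₁). -/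
/-- Let `A`, `B` be abelian groups, `ι : A → B` and `n : B → A`
homomorphisms with `n (ι a) = a²`.  Let `D = {(a², (ι a)⁻¹) : a ∈ A} ≤ A × B` and
`C = (A × B)/D`.  Let `A₊, A₁ ≤ A` and `B₀, B₁ ≤ B` with `n(B₀) ⊆ A₊`, `n(B₁) ⊆ A₁`,
and let `C₀, C₁ ≤ C` be the images of `A₊ × B₀` and `A₁ × B₁`.  Then `a ↦ [(a,1)]`
induces an injective map `A/(A₊·A₁) → C/(C₀·C₁)` (we state well-definedness and
injectivity together as an `iff`). -/
theorem stmt1 {A B : Type*} [CommGroup A] [CommGroup B]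
    (ι : A →* B) (n : B →* A) (hn : ∀ a : A, n (ι a) = a ^ 2)
    (D : Subgroup (A × B))
    (hD : ∀ x : A × B, x ∈ D ↔ ∃ a : A, x = (a ^ 2, (ι a)⁻¹))
    (Ap A1 : Subgroup A) (B0 B1 : Subgroup B)
    (hB0 : ∀ b ∈ B0, n b ∈ Ap) (hB1 : ∀ b ∈ B1, n b ∈ A1)
    (C0 C1 : Subgroup ((A × B) ⧸ D))
    (hC0 : C0 = Subgroup.map (QuotientGroup.mk' D) (Ap.prod B0))
    (hC1 : C1 = Subgroup.map (QuotientGroup.mk' D) (A1.prod B1)) :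
    ∀ a a' : A,
      ((QuotientGroup.mk a : A ⧸ (Ap ⊔ A1)) = QuotientGroup.mk a')
        ↔ ((QuotientGroup.mk ((QuotientGroup.mk' D) (a, 1)) : ((A × B) ⧸ D) ⧸ (C0 ⊔ C1))
            = QuotientGroup.mk ((QuotientGroup.mk' D) (a', 1))) := by
  set φ : A × B →* A := (MonoidHom.fst A B) * (n.comp (MonoidHom.snd A B)) with hφdef
  have hφ : ∀ x ∈ D, φ x = 1 := by
    intro x hx
    obtain ⟨c, rfl⟩ := (hD x).mp hx
    simp [hφdef, hn]
  have hs : ∀ x : A × B, QuotientGroup.lift D φ hφ ((QuotientGroup.mk' D) x) = φ x :=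
    fun x => rfl
  intro a a'
  constructor
  · intro h
    rw [QuotientGroup.eq] at h ⊢
    rcases Subgroup.mem_sup.mp h with ⟨p, hp, q, hq, hpq⟩
    have : ((QuotientGroup.mk' D) (a, 1))⁻¹ * (QuotientGroup.mk' D) (a', 1)
        = (QuotientGroup.mk' D) (p, 1) * (QuotientGroup.mk' D) (q, 1) := by
      rw [← map_inv, ← map_mul, ← map_mul]
      congr 1
      ext <;> simp [← hpq]
    rw [this]
    exact mul_mem
      (Subgroup.mem_sup_left (hC0 ▸ ⟨(p, 1), ⟨hp, one_mem _⟩, rfl⟩))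
      (Subgroup.mem_sup_right (hC1 ▸ ⟨(q, 1), ⟨hq, one_mem _⟩, rfl⟩))
  · intro h
    rw [QuotientGroup.eq] at h ⊢
    rcases Subgroup.mem_sup.mp h with ⟨y, hy, z, hz, hyz⟩
    rw [hC0] at hy; rw [hC1] at hz
    rcases hy with ⟨⟨p, b⟩, hpb, rfl⟩
    rcases hz with ⟨⟨q, b'⟩, hqb', rfl⟩
    have key : ((QuotientGroup.mk' D) (a, 1))⁻¹ * (QuotientGroup.mk' D) (a', 1)
        = (QuotientGroup.mk' D) ((p, b) * (q, b')) := by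
      rw [map_mul]; exact hyz.symm
    rw [← map_inv, ← map_mul] at key
    have := congrArg (QuotientGroup.lift D φ hφ) key
    rw [hs, hs] at this
    simp only [hφdef, MonoidHom.mul_apply, MonoidHom.coe_fst, MonoidHom.comp_apply,
      MonoidHom.coe_snd, Prod.fst_mul, Prod.snd_mul, Prod.fst_inv, Prod.snd_inv,
      Prod.mk_mul_mk] at this
    -- this : a⁻¹ * a' * n (1⁻¹ * 1) = p * q * n (b * b')
    have h2 : a⁻¹ * a' = (p * n b) * (q * n b') := by
      simp only [map_mul, inv_one, map_one, mul_one] at this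
      rw [this, mul_mul_mul_comm]
    exact Subgroup.mem_sup.mpr ⟨p * n b, mul_mem hpb.1 (hB0 b hpb.2),
      q * n b', mul_mem hqb'.1 (hB1 b' hqb'.2), h2.symm⟩
end

section
/- Let G be a group, E an abelian group, c : E → E an automorphism with c∘c = id, F a subgroup of the center of G, and φ : F → E an injective group homomorphism with c(φ(f)) = φ(f) for all f ∈ F and whose image equals the subgroup of c-fixed points of E. Let N = {(f, φ(f)⁻¹) : f ∈ F} ≤ G × E, let H = (G × E)/N and let q : G × E → H be the quotient map. Let K ≤ G and K_E ≤ E be subgroups and set U = q(K × K_E). Let G₀ ≤ G and E₀ ≤ E be subgroups with c(E₀) = E₀ and with {f ∈ F : φ(f) ∈ E₀} ⊆ G₀, and set H₀ = q(G₀ × E₀). Assume: (i) the only element of E₀ of the form y·c(y)⁻¹ with y ∈ K_E is the identity; (ii) every f ∈ F with φ(f) ∈ K_E lies in K. Then for every g ∈ G, the image of G₀ ∩ gKg⁻¹ under x ↦ q(x,1) equals H₀ ∩ q(g,1)·U·q(g,1)⁻¹. -/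
/-- With `H = (G × E)/N` as before (`F` central in `G`, `φ : F → E`
injective with image the `c`-fixed points of `E`, `c` an involution of `E`),
`U = q(K × K_E)`, `H₀ = q(G₀ × E₀)` where `c(E₀) = E₀` and `{f ∈ F : φ f ∈ E₀} ⊆ G₀`;
assuming (i) the only element of `E₀` of the form `y·c(y)⁻¹` with `y ∈ K_E` is `1`,
and (ii) every `f ∈ F` with `φ f ∈ K_E` lies in `K`, then for every `g ∈ G` the image
of `G₀ ∩ gKg⁻¹` under `x ↦ q(x,1)` equals `H₀ ∩ q(g,1)·U·q(g,1)⁻¹`. -/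
theorem stmt2 {G E : Type*} [Group G] [CommGroup E]
    (c : E →* E) (hc : ∀ y : E, c (c y) = y)
    (F : Subgroup G) (hF : F ≤ Subgroup.center G)
    (φ : ↥F →* E) (hφ : Function.Injective φ)
    (hfix : ∀ f : F, c (φ f) = φ f)
    (hfixall : ∀ y : E, c y = y → ∃ f : F, φ f = y)
    (N : Subgroup (G × E)) [N.Normal]
    (hNdef : ∀ x : G × E, x ∈ N ↔ ∃ f : F, x = ((f : G), (φ f)⁻¹))
    (K : Subgroup G) (KE : Subgroup E)
    (U : Subgroup ((G × E) ⧸ N))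
    (hU : U = Subgroup.map (QuotientGroup.mk' N) (K.prod KE))
    (G₀ : Subgroup G) (E₀ : Subgroup E)
    (hE₀ : Subgroup.map c E₀ = E₀)
    (hFG₀ : ∀ f : F, φ f ∈ E₀ → (f : G) ∈ G₀)
    (H₀ : Subgroup ((G × E) ⧸ N))
    (hH₀ : H₀ = Subgroup.map (QuotientGroup.mk' N) (G₀.prod E₀))
    (h1 : ∀ y ∈ KE, y * (c y)⁻¹ ∈ E₀ → y * (c y)⁻¹ = 1)
    (h2 : ∀ f : F, φ f ∈ KE → (f : G) ∈ K) :
    ∀ g : G,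
      (fun x : G => (QuotientGroup.mk' N) (x, 1)) '' {x : G | x ∈ G₀ ∧ ∃ k ∈ K, x = g * k * g⁻¹}
        = {h : (G × E) ⧸ N | h ∈ H₀ ∧ ∃ u ∈ U,
            h = (QuotientGroup.mk' N) (g, 1) * u * ((QuotientGroup.mk' N) (g, 1))⁻¹} := by

  intro g
  ext h
  simp only [Set.mem_image, Set.mem_setOf_eq]
  have hcent : ∀ (t : F) (x : G), x * (t : G) = (t : G) * x := fun t x =>
    Subgroup.mem_center_iff.mp (hF t.2) x
  constructor
  · rintro ⟨x, ⟨hxG₀, k, hk, rfl⟩, rfl⟩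
    refine ⟨?_, QuotientGroup.mk' N (k, 1), ?_, ?_⟩
    · rw [hH₀]; exact ⟨(g * k * g⁻¹, 1), ⟨hxG₀, E₀.one_mem⟩, rfl⟩
    · rw [hU]; exact ⟨(k, 1), ⟨hk, KE.one_mem⟩, rfl⟩
    · rw [← map_inv, ← map_mul, ← map_mul]
      congr 1
      simp [Prod.ext_iff]
  · rintro ⟨hH, u, hu, rfl⟩
    rw [hU] at hu
    obtain ⟨⟨k, y⟩, ⟨hk, hy⟩, rfl⟩ := hu
    have hprod : (QuotientGroup.mk' N) (g, (1 : E)) * (QuotientGroup.mk' N) (k, y) *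
        ((QuotientGroup.mk' N) (g, (1 : E)))⁻¹ = QuotientGroup.mk' N (g * k * g⁻¹, y) := by
      rw [← map_inv, ← map_mul, ← map_mul]
      congr 1
      simp [Prod.ext_iff]
    rw [hprod] at hH ⊢
    rw [hH₀] at hH
    obtain ⟨⟨a, e⟩, ⟨ha, he⟩, hq⟩ := hH
    rw [QuotientGroup.mk'_eq_mk'] at hq
    obtain ⟨n, hn, heq⟩ := hq
    obtain ⟨f, rfl⟩ := (hNdef n).1 hn
    have h1' : a * (f : G) = g * k * g⁻¹ := congrArg Prod.fst heq
    have h2' : e * (φ f)⁻¹ = y := congrArg Prod.snd heq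
    have hey : e = y * φ f := by rw [← h2']; group
    have hce : c e ∈ E₀ := by rw [← hE₀]; exact ⟨e, he, rfl⟩
    have hcy : c y = y := by
      have hycy : y * (c y)⁻¹ = 1 := by
        apply h1 y hy
        have hcompare : y * (c y)⁻¹ = e * (c e)⁻¹ := by
          rw [hey, map_mul, hfix]
          group
        rw [hcompare]
        exact E₀.mul_mem he (E₀.inv_mem hce)
      exact (mul_inv_eq_one.mp hycy).symm
    obtain ⟨f', hf'⟩ := hfixall y hcy
    have hf'K : (f' : G) ∈ K := h2 f' (hf' ▸ hy)
    refine ⟨(f' : G) * (g * k * g⁻¹), ⟨?_, (f' : G) * k, K.mul_mem hf'K hk, ?_⟩, ?_⟩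
    · have hffG₀ : ((f' * f : F) : G) ∈ G₀ :=
        hFG₀ (f' * f) (by rw [map_mul, hf', ← hey]; exact he)
      have hx : (f' : G) * (g * k * g⁻¹) = a * ((f' * f : F) : G) := by
        rw [← h1', ← mul_assoc, ← hcent f' a, mul_assoc]
        push_cast
        ring_nf
      rw [hx]
      exact G₀.mul_mem ha hffG₀
    · calc (f' : G) * (g * k * g⁻¹) = ((f' : G) * g) * k * g⁻¹ := by group
        _ = (g * (f' : G)) * k * g⁻¹ := by rw [← hcent]
        _ = g * ((f' : G) * k) * g⁻¹ := by group
    · rw [QuotientGroup.mk'_eq_mk']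
      refine ⟨(((f'⁻¹ : F) : G), (φ f'⁻¹)⁻¹), (hNdef _).2 ⟨f'⁻¹, rfl⟩, ?_⟩
      have hfst : (f' : G) * (g * k * g⁻¹) * ((f'⁻¹ : F) : G) = g * k * g⁻¹ := by
        push_cast
        rw [← hcent f' (g * k * g⁻¹)]
        group
      have hsnd : (1 : E) * (φ f'⁻¹)⁻¹ = y := by
        rw [map_inv, inv_inv, one_mul, hf']
      exact Prod.ext hfst hsnd
end

section
/- Let q > 3 be a power of an odd prime. Regard PSL₂(𝔽_q), the image of SL₂(𝔽_q), as a subgroup of PGL₂(𝔽_q) = GL₂(𝔽_q)/center. Let G be a subgroup of PGL₂(𝔽_q) containing PSL₂(𝔽_q), and let N be a normal subgroup of G containing the image in PGL₂(𝔽_q) of a matrix that is conjugate in GL₂(𝔽_q) to the diagonal matrix diag(1,−1). Then N contains PSL₂(𝔽_q). -/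
namespace Stmt4Aux

open Matrix

variable {K : Type*} [Field K]

/-- Upper elementary matrix as an element of `SL₂`. -/
def uE (t : K) : Matrix.SpecialLinearGroup (Fin 2) K :=
  ⟨!![1, t; 0, 1], by simp [Matrix.det_fin_two_of]⟩

/-- Lower elementary matrix as an element of `SL₂`. -/
def lE (t : K) : Matrix.SpecialLinearGroup (Fin 2) K :=
  ⟨!![1, 0; t, 1], by simp [Matrix.det_fin_two_of]⟩

lemma uE_mul (a b : K) : uE a * uE b = uE (a + b) := by
  apply Subtype.ext
  show (uE a : Matrix (Fin 2) (Fin 2) K) * (uE b : Matrix (Fin 2) (Fin 2) K) = (uE (a + b) : Matrix (Fin 2) (Fin 2) K)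
  simp [uE, Matrix.mul_fin_two, add_comm]

lemma lE_mul (a b : K) : lE a * lE b = lE (a + b) := by
  apply Subtype.ext
  show (lE a : Matrix (Fin 2) (Fin 2) K) * (lE b : Matrix (Fin 2) (Fin 2) K) = (lE (a + b) : Matrix (Fin 2) (Fin 2) K)
  simp [lE, Matrix.mul_fin_two, add_comm]

lemma uE_zero : uE (0 : K) = 1 := by
  apply Subtype.ext
  simp [uE, Matrix.one_fin_two]

lemma lE_zero : lE (0 : K) = 1 := by
  apply Subtype.ext
  simp [lE, Matrix.one_fin_two]

lemma diag_eq (a b : K) : Matrix.diagonal ![a, b] = !![a, 0; 0, b] := by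
  ext i j
  fin_cases i <;> fin_cases j <;> simp [Matrix.diagonal]

/-- conjugating the involution by an upper elementary matrix. -/
lemma conj_u (t : K) :
    !![(1:K), t; 0, 1] * !![1, 0; 0, -1] * !![1, -t; 0, 1] * !![1, 0; 0, -1]
      = !![1, 2*t; 0, 1] := by
  simp [Matrix.mul_fin_two]; ring

lemma conj_l (t : K) :
    !![(1:K), 0; t, 1] * !![1, 0; 0, -1] * !![1, 0; -t, 1] * !![1, 0; 0, -1]
      = !![1, 0; 2*t, 1] := by
  simp [Matrix.mul_fin_two]; ring

lemma matdecomp (a b c d : K) (hc : c ≠ 0) (hdet : a * d - b * c = 1) :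
    !![(1:K), (a-1)/c; 0, 1] * !![1, 0; c, 1] * !![1, (d-1)/c; 0, 1]
      = !![a, b; c, d] := by
  rw [Matrix.mul_fin_two, Matrix.mul_fin_two]
  ext i j
  fin_cases i <;> fin_cases j <;> simp <;> field_simp <;> ring_nf <;>
    linear_combination hdet

lemma matdecomp0 (a b d : K) (ha : a ≠ 0) (had : a * d = 1) :
    !![(1:K), 0; -1, 1] *
      (!![(1:K), (a-1)/a; 0, 1] * !![1, 0; a, 1] * !![1, (b+d-1)/a; 0, 1])
      = !![a, b; 0, d] := by
  rw [Matrix.mul_fin_two, Matrix.mul_fin_two, Matrix.mul_fin_two]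
  ext i j
  fin_cases i <;> fin_cases j <;> simp <;> field_simp <;> ring_nf <;>
    first
      | linear_combination had
      | linear_combination -had

end Stmt4Aux


/-- The projective general linear group `PGL₂(K) = GL₂(K)/center`. -/
abbrev PGL2 (K : Type*) [Field K] :=
  GL (Fin 2) K ⧸ Subgroup.center (GL (Fin 2) K)

/-- `PSL₂(K)`, the image of `SL₂(K)` in `PGL₂(K)`. -/
noncomputable def PSL2 (K : Type*) [Field K] : Subgroup (PGL2 K) :=
  ((QuotientGroup.mk' (Subgroup.center (GL (Fin 2) K))).comp
    Matrix.SpecialLinearGroup.toGL).range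

/-- Let `q > 3` be a power of an odd prime (formalized as a finite
field `K` with `|K| > 3` of characteristic `≠ 2`).  Let `G ≤ PGL₂(K)` contain
`PSL₂(K)`, and let `N` be a normal subgroup of `G` containing the image in `PGL₂(K)`
of a matrix conjugate in `GL₂(K)` to `diag(1,−1)`.  Then `N ⊇ PSL₂(K)`. -/
theorem stmt4 {K : Type*} [Field K] [Fintype K]
    (hcard : 3 < Fintype.card K) (hchar : ringChar K ≠ 2)
    (G N : Subgroup (PGL2 K))
    (hPSL : PSL2 K ≤ G)
    (hNG : N ≤ G)
    (hnormal : ∀ g ∈ G, ∀ x ∈ N, g * x * g⁻¹ ∈ N)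
    (hdiag : ∃ m d c : GL (Fin 2) K,
      (↑d : Matrix (Fin 2) (Fin 2) K) = Matrix.diagonal ![1, -1] ∧
      m = c * d * c⁻¹ ∧
      (QuotientGroup.mk m : PGL2 K) ∈ N) :
    PSL2 K ≤ N := by
  classical
  obtain ⟨m, dG, c, hd, hm, hmN⟩ := hdiag
  set ψ := QuotientGroup.mk' (Subgroup.center (GL (Fin 2) K)) with hψ
  set φ := ψ.comp Matrix.SpecialLinearGroup.toGL with hφdef
  have hφG : ∀ S : Matrix.SpecialLinearGroup (Fin 2) K, φ S ∈ G := by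
    intro S
    exact hPSL ⟨S, rfl⟩
  have two_ne : (2 : K) ≠ 0 := Ring.two_ne_zero hchar
  -- the matrix of dG
  have hdmat : (↑dG : Matrix (Fin 2) (Fin 2) K) = !![1, 0; 0, -1] := by
    rw [hd, Stmt4Aux.diag_eq]
  -- Step A: the class of dG itself lies in N
  set δ : Kˣ := Matrix.GeneralLinearGroup.det c with hδ
  have hδval : (δ : K) = (↑c : Matrix (Fin 2) (Fin 2) K).det := rfl
  set z : GL (Fin 2) K :=
    ⟨!![1, 0; 0, (δ : K)], !![1, 0; 0, ((δ⁻¹ : Kˣ) : K)],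
      by simp [Matrix.mul_fin_two, Matrix.one_fin_two],
      by simp [Matrix.mul_fin_two, Matrix.one_fin_two]⟩ with hz
  set s : GL (Fin 2) K := c * z⁻¹ with hs
  have hdets : (↑s : Matrix (Fin 2) (Fin 2) K).det = 1 := by
    rw [hs, Units.val_mul, Matrix.det_mul]
    have hzinv : (↑(z⁻¹) : Matrix (Fin 2) (Fin 2) K) = !![1, 0; 0, ((δ⁻¹ : Kˣ) : K)] := rfl
    rw [hzinv, Matrix.det_fin_two_of, ← hδval]
    simp
  set S : Matrix.SpecialLinearGroup (Fin 2) K := ⟨↑s, hdets⟩ with hS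
  have htoGL : Matrix.SpecialLinearGroup.toGL S = s := Units.ext rfl
  have hcomm : z * dG = dG * z := by
    apply Units.ext
    show ((z : Matrix (Fin 2) (Fin 2) K) * (dG : Matrix (Fin 2) (Fin 2) K)) = (dG : Matrix (Fin 2) (Fin 2) K) * (z : Matrix (Fin 2) (Fin 2) K)
    rw [hdmat]
    show !![1, 0; 0, (δ : K)] * _ = _ * !![1, 0; 0, (δ : K)]
    simp [Matrix.mul_fin_two]
  have hc' : c = s * z := by rw [hs]; group
  have h1 : m = s * dG * s⁻¹ := by
    rw [hm, hc', mul_inv_rev]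
    have h2 : z * dG * z⁻¹ = dG := by rw [hcomm, mul_inv_cancel_right]
    calc s * z * dG * (z⁻¹ * s⁻¹) = s * (z * dG * z⁻¹) * s⁻¹ := by group
      _ = s * dG * s⁻¹ := by rw [h2]
  have hsG : ψ s ∈ G := by
    have : φ S ∈ G := hφG S
    rwa [hφdef, MonoidHom.comp_apply, htoGL] at this
  have hdN : ψ dG ∈ N := by
    have hn := hnormal (ψ s)⁻¹ (G.inv_mem hsG) (ψ m) hmN
    have : (ψ s)⁻¹ * ψ m * ((ψ s)⁻¹)⁻¹ = ψ dG := by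
      rw [inv_inv, ← map_inv, ← map_mul, ← map_mul]
      congr 1
      rw [h1]; group
    rwa [this] at hn
  -- Step B: N contains the classes of all elementary matrices
  have hinvu : ∀ t : K, (Matrix.SpecialLinearGroup.toGL (Stmt4Aux.uE t))⁻¹
      = Matrix.SpecialLinearGroup.toGL (Stmt4Aux.uE (-t)) := by
    intro t
    refine inv_eq_of_mul_eq_one_right ?_
    rw [← map_mul, Stmt4Aux.uE_mul, add_neg_cancel, Stmt4Aux.uE_zero, map_one]
  have hinvl : ∀ t : K, (Matrix.SpecialLinearGroup.toGL (Stmt4Aux.lE t))⁻¹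
      = Matrix.SpecialLinearGroup.toGL (Stmt4Aux.lE (-t)) := by
    intro t
    refine inv_eq_of_mul_eq_one_right ?_
    rw [← map_mul, Stmt4Aux.lE_mul, add_neg_cancel, Stmt4Aux.lE_zero, map_one]
  have hu2 : ∀ t : K, φ (Stmt4Aux.uE (2*t)) ∈ N := by
    intro t
    have hgl : Matrix.SpecialLinearGroup.toGL (Stmt4Aux.uE t) * dG *
        (Matrix.SpecialLinearGroup.toGL (Stmt4Aux.uE t))⁻¹ * dG
        = Matrix.SpecialLinearGroup.toGL (Stmt4Aux.uE (2*t)) := by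
      apply Units.ext
      rw [hinvu]
      show ((Stmt4Aux.uE t : Matrix (Fin 2) (Fin 2) K) * (dG : Matrix (Fin 2) (Fin 2) K) * (Stmt4Aux.uE (-t) : Matrix (Fin 2) (Fin 2) K) * (dG : Matrix (Fin 2) (Fin 2) K)) = _
      rw [hdmat]
      exact Stmt4Aux.conj_u t
    have hn := hnormal (φ (Stmt4Aux.uE t)) (hφG _) (ψ dG) hdN
    have hmem : φ (Stmt4Aux.uE t) * ψ dG * (φ (Stmt4Aux.uE t))⁻¹ * ψ dG ∈ N :=
      N.mul_mem hn hdN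
    have : φ (Stmt4Aux.uE t) * ψ dG * (φ (Stmt4Aux.uE t))⁻¹ * ψ dG
        = φ (Stmt4Aux.uE (2*t)) := by
      rw [hφdef]
      simp only [MonoidHom.comp_apply, ← map_inv, ← map_mul]
      rw [map_inv Matrix.SpecialLinearGroup.toGL, hgl]
    rwa [this] at hmem
  have hl2 : ∀ t : K, φ (Stmt4Aux.lE (2*t)) ∈ N := by
    intro t
    have hgl : Matrix.SpecialLinearGroup.toGL (Stmt4Aux.lE t) * dG *
        (Matrix.SpecialLinearGroup.toGL (Stmt4Aux.lE t))⁻¹ * dG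
        = Matrix.SpecialLinearGroup.toGL (Stmt4Aux.lE (2*t)) := by
      apply Units.ext
      rw [hinvl]
      show ((Stmt4Aux.lE t : Matrix (Fin 2) (Fin 2) K) * (dG : Matrix (Fin 2) (Fin 2) K) * (Stmt4Aux.lE (-t) : Matrix (Fin 2) (Fin 2) K) * (dG : Matrix (Fin 2) (Fin 2) K)) = _
      rw [hdmat]
      exact Stmt4Aux.conj_l t
    have hn := hnormal (φ (Stmt4Aux.lE t)) (hφG _) (ψ dG) hdN
    have hmem : φ (Stmt4Aux.lE t) * ψ dG * (φ (Stmt4Aux.lE t))⁻¹ * ψ dG ∈ N :=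
      N.mul_mem hn hdN
    have : φ (Stmt4Aux.lE t) * ψ dG * (φ (Stmt4Aux.lE t))⁻¹ * ψ dG
        = φ (Stmt4Aux.lE (2*t)) := by
      rw [hφdef]
      simp only [MonoidHom.comp_apply, ← map_inv, ← map_mul]
      rw [map_inv Matrix.SpecialLinearGroup.toGL, hgl]
    rwa [this] at hmem
  have hu : ∀ t : K, φ (Stmt4Aux.uE t) ∈ N := by
    intro t
    have h := hu2 (t/2)
    have ht : 2 * (t/2) = t := by field_simp
    rwa [ht] at h
  have hl : ∀ t : K, φ (Stmt4Aux.lE t) ∈ N := by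
    intro t
    have h := hl2 (t/2)
    have ht : 2 * (t/2) = t := by field_simp
    rwa [ht] at h
  -- Step C: every element of SL₂ has class in N
  have main : ∀ T : Matrix.SpecialLinearGroup (Fin 2) K, φ T ∈ N := by
    intro T
    set a := (↑T : Matrix (Fin 2) (Fin 2) K) 0 0 with hA
    set b := (↑T : Matrix (Fin 2) (Fin 2) K) 0 1 with hB
    set cc := (↑T : Matrix (Fin 2) (Fin 2) K) 1 0 with hC
    set dd := (↑T : Matrix (Fin 2) (Fin 2) K) 1 1 with hD
    have hTmat : (↑T : Matrix (Fin 2) (Fin 2) K) = !![a, b; cc, dd] :=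
      Matrix.eta_fin_two _
    have hdet : a * dd - b * cc = 1 := by
      have := T.2
      rwa [Matrix.det_fin_two] at this
    by_cases hc0 : cc = 0
    · have had : a * dd = 1 := by rw [hc0] at hdet; linear_combination hdet
      have ha : a ≠ 0 := left_ne_zero_of_mul_eq_one had
      have hprod : Stmt4Aux.lE (-1) *
          (Stmt4Aux.uE ((a-1)/a) * Stmt4Aux.lE a * Stmt4Aux.uE ((b+dd-1)/a)) = T := by
        apply Subtype.ext
        simp only [Matrix.SpecialLinearGroup.coe_mul]
        rw [hTmat, hc0]
        exact Stmt4Aux.matdecomp0 a b dd ha had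
      rw [← hprod, map_mul, map_mul, map_mul]
      exact N.mul_mem (hl _) (N.mul_mem (N.mul_mem (hu _) (hl _)) (hu _))
    · have hprod : Stmt4Aux.uE ((a-1)/cc) * Stmt4Aux.lE cc * Stmt4Aux.uE ((dd-1)/cc) = T := by
        apply Subtype.ext
        show (↑(Stmt4Aux.uE ((a-1)/cc)) : Matrix (Fin 2) (Fin 2) K) * _ * _ = _
        rw [hTmat]
        exact Stmt4Aux.matdecomp a b cc dd hc0 hdet
      rw [← hprod, map_mul, map_mul]
      exact N.mul_mem (N.mul_mem (hu _) (hl _)) (hu _)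
  intro x hx
  have hx' : x ∈ φ.range := hx
  obtain ⟨T, rfl⟩ := hx'
  exact main T
end
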